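/- arXiv:hep-th/0406213 — 2 statements merged into one kernel-verified Lean document; each statement's English description precedes it below -/
import Mathlib

section
/- Let A be a positive definite Hermitian n×n complex matrix and B an arbitrary n×n complex matrix. Then the matrix Y := (1/2) ∫_ℝ A^{it−1/2} B A^{−it−1/2} dt / cosh(π t) satisfies A Y + Y A = B. -/
open MeasureTheory Complex Matrix
open scoped ComplexOrder

/-- The complex matrix power `A ^ z` of a Hermitian matrix `A`, defined by functional
calculus: apply `fun x => x ^ z` to the eigenvalues of `A` in a unitary eigenbasis.
(Junk value `0` if `A` is not Hermitian.) -/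
noncomputable def matCpow {n : ℕ} (A : Matrix (Fin n) (Fin n) ℂ) (z : ℂ) :
    Matrix (Fin n) (Fin n) ℂ :=
  @dite _ A.IsHermitian (Classical.dec _)
    (fun hA => (hA.eigenvectorUnitary : Matrix (Fin n) (Fin n) ℂ) *
        Matrix.diagonal (fun i => (hA.eigenvalues i : ℂ) ^ z) *
        star (hA.eigenvectorUnitary : Matrix (Fin n) (Fin n) ℂ))
    (fun _ => 0)

/-- The positive semidefinite square root of a positive semidefinite matrix.
(Junk value `0` if `A` is not positive semidefinite.) -/
noncomputable def matSqrt {n : ℕ} (A : Matrix (Fin n) (Fin n) ℂ) :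
    Matrix (Fin n) (Fin n) ℂ :=
  @dite _ A.PosSemidef (Classical.dec _) (fun h => (h.1.eigenvectorUnitary : Matrix (Fin n) (Fin n) ℂ) *
      Matrix.diagonal ((↑) ∘ Real.sqrt ∘ h.1.eigenvalues) *
      star (h.1.eigenvectorUnitary : Matrix (Fin n) (Fin n) ℂ)) (fun _ => 0)

/-- `I_g(X) := ∫_ℝ (√g)^{it+1/2} X (√g)^{-it-1/2} dt / cosh (π t)`, taken entrywise. -/
noncomputable def Ig {n : ℕ} (g X : Matrix (Fin n) (Fin n) ℂ) :
    Matrix (Fin n) (Fin n) ℂ :=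
  Matrix.of fun i j => ∫ t : ℝ,
    (matCpow (matSqrt g) (Complex.I * t + 1 / 2) * X *
      matCpow (matSqrt g) (-(Complex.I * t) - 1 / 2)) i j / (Real.cosh (Real.pi * t) : ℂ)


noncomputable def logistic (t : ℝ) : ℝ := Real.exp (2 * Real.pi * t) / (1 + Real.exp (2 * Real.pi * t))

lemma logistic_hasDerivAt (t : ℝ) :
    HasDerivAt logistic
      (2 * Real.pi * Real.exp (2 * Real.pi * t) / (1 + Real.exp (2 * Real.pi * t)) ^ 2) t := by
  have hE : HasDerivAt (fun t : ℝ => Real.exp (2 * Real.pi * t))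
      (Real.exp (2 * Real.pi * t) * (2 * Real.pi)) t :=
    by simpa using ((hasDerivAt_id t).const_mul (2 * Real.pi)).exp
  have h1E : HasDerivAt (fun t : ℝ => 1 + Real.exp (2 * Real.pi * t))
      (Real.exp (2 * Real.pi * t) * (2 * Real.pi)) t := by
    exact hE.const_add 1
  have hne : (1 + Real.exp (2 * Real.pi * t)) ≠ 0 := by positivity
  have := hE.div h1E hne
  convert this using 1
  · rfl
  · rfl
  · rfl
  ring

lemma logistic_range : Set.range logistic = Set.Ioo 0 1 := by
  ext y
  constructor
  · rintro ⟨t, rfl⟩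
    have hE : 0 < Real.exp (2 * Real.pi * t) := Real.exp_pos _
    constructor
    · unfold logistic; positivity
    · unfold logistic
      rw [div_lt_one (by positivity)]
      linarith
  · rintro ⟨hy0, hy1⟩
    refine ⟨Real.log (y / (1 - y)) / (2 * Real.pi), ?_⟩
    have h1y : 0 < 1 - y := by linarith
    have hq : 0 < y / (1 - y) := by positivity
    unfold logistic
    have h2π : (2 * Real.pi) ≠ 0 := by positivity
    rw [mul_div_cancel₀ _ h2π, Real.exp_log hq]
    field_simp
    ring

lemma logistic_injOn : Set.InjOn logistic Set.univ := by
  intro a _ b _ h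
  unfold logistic at h
  have hEa : 0 < Real.exp (2 * Real.pi * a) := Real.exp_pos _
  have hEb : 0 < Real.exp (2 * Real.pi * b) := Real.exp_pos _
  rw [div_eq_div_iff (by positivity) (by positivity)] at h
  have : Real.exp (2 * Real.pi * a) = Real.exp (2 * Real.pi * b) := by nlinarith
  have := Real.exp_injective this
  have h2π : (2 * Real.pi) ≠ 0 := by positivity
  exact mul_left_cancel₀ h2π this

lemma pointwise_eq (x t : ℝ) :
    |2 * Real.pi * Real.exp (2 * Real.pi * t) / (1 + Real.exp (2 * Real.pi * t)) ^ 2| •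
      ((logistic t : ℂ) ^ ((1 / 2 + ((x / (2 * Real.pi) : ℝ) : ℂ) * Complex.I) - 1) *
        (1 - (logistic t : ℂ)) ^ (1 - (1 / 2 + ((x / (2 * Real.pi) : ℝ) : ℂ) * Complex.I) - 1))
      = (Real.pi : ℂ) * (Complex.exp (x * t * Complex.I) / (Real.cosh (Real.pi * t) : ℂ)) := by
  set s : ℂ := 1 / 2 + ((x / (2 * Real.pi) : ℝ) : ℂ) * Complex.I with hs_def
  have hπ : (0:ℝ) < Real.pi := Real.pi_pos
  set E := Real.exp (2 * Real.pi * t) with hE_def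
  have hE : 0 < E := Real.exp_pos _
  have h1E : (0:ℝ) < 1 + E := by positivity
  set L := Real.log (1 + E) with hL_def
  have hlog : logistic t = E / (1 + E) := rfl
  have hq : (0:ℝ) < E / (1 + E) := by positivity
  have hlogq : Real.log (E / (1 + E)) = 2 * Real.pi * t - L := by
    rw [Real.log_div hE.ne' h1E.ne', hE_def, Real.log_exp]
  have hL1 : ((logistic t : ℝ) : ℂ) ^ (s - 1)
      = Complex.exp (((2 * Real.pi * t - L : ℝ) : ℂ) * (s - 1)) := by
    rw [hlog, Complex.cpow_def_of_ne_zero (Complex.ofReal_ne_zero.mpr hq.ne'),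
      ← Complex.ofReal_log hq.le, hlogq]
  have h1E' : ((1 + E : ℝ) : ℂ) ≠ 0 := Complex.ofReal_ne_zero.mpr h1E.ne'
  have h2 : 1 - ((logistic t : ℝ) : ℂ) = ((1 / (1 + E) : ℝ) : ℂ) := by
    rw [hlog]; push_cast at h1E' ⊢; field_simp
    ring
  have hq2 : (0:ℝ) < 1 / (1 + E) := by positivity
  have hL2 : ((1 / (1 + E) : ℝ) : ℂ) ^ (1 - s - 1)
      = Complex.exp (((-L : ℝ) : ℂ) * (1 - s - 1)) := by
    rw [Complex.cpow_def_of_ne_zero (Complex.ofReal_ne_zero.mpr hq2.ne'),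
      ← Complex.ofReal_log hq2.le, Real.log_div one_ne_zero h1E.ne', Real.log_one]
    norm_num
    rw [hL_def]
  rw [hL1, h2, hL2, ← Complex.exp_add]
  have hexpo : ((2 * Real.pi * t - L : ℝ) : ℂ) * (s - 1) + ((-L : ℝ) : ℂ) * (1 - s - 1)
      = ((-(Real.pi * t) : ℝ) : ℂ) + ((x * t : ℝ) : ℂ) * Complex.I + ((L : ℝ) : ℂ) := by
    rw [hs_def]
    have hπ' : (Real.pi : ℂ) ≠ 0 := Complex.ofReal_ne_zero.mpr hπ.ne'
    push_cast
    field_simp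
    ring
  rw [hexpo, Complex.exp_add, Complex.exp_add, ← Complex.ofReal_exp, ← Complex.ofReal_exp,
    Real.exp_log h1E]
  have habs : |2 * Real.pi * E / (1 + E) ^ 2| = 2 * Real.pi * E / (1 + E) ^ 2 :=
    abs_of_pos (by positivity)
  -- now everything in terms of u = exp (π t)
  set u := Real.exp (Real.pi * t) with hu_def
  have hu : 0 < u := Real.exp_pos _
  have hE_u : E = u ^ 2 := by
    rw [hE_def, hu_def, ← Real.exp_nat_mul]; norm_num; ring_nf
  have hexp_neg : Real.exp (-(Real.pi * t)) = u⁻¹ := by rw [Real.exp_neg]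
  have hcosh : Real.cosh (Real.pi * t) = (u + u⁻¹) / 2 := by
    rw [Real.cosh_eq, hexp_neg]
  have hcomb : 2 * Real.pi * u ^ 2 / (1 + u ^ 2) ^ 2 * u⁻¹ * (1 + u ^ 2)
      = Real.pi / ((u + u⁻¹) / 2) := by
    have h6 : (0:ℝ) < 1 + u ^ 2 := by positivity
    field_simp
    ring
  rw [habs, hE_u, hexp_neg, hcosh, Complex.real_smul]
  have hX : Complex.exp (((x * t : ℝ) : ℂ) * Complex.I)
      = Complex.exp ((x : ℂ) * (t : ℂ) * Complex.I) := by norm_cast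
  rw [hX]
  have key2 : ((2 * Real.pi * u ^ 2 / (1 + u ^ 2) ^ 2 : ℝ) : ℂ) * ((u⁻¹ : ℝ) : ℂ) *
        ((1 + u ^ 2 : ℝ) : ℂ) = ((Real.pi : ℝ) : ℂ) / (((u + u⁻¹) / 2 : ℝ) : ℂ) := by
    rw [← Complex.ofReal_mul, ← Complex.ofReal_mul, ← Complex.ofReal_div, hcomb]
  linear_combination Complex.exp ((x : ℂ) * (t : ℂ) * Complex.I) * key2

lemma key_integral (x : ℝ) :
    ∫ t : ℝ, Complex.exp (x * t * Complex.I) / (Real.cosh (Real.pi * t) : ℂ)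
      = 1 / Complex.cosh (x / 2) := by
  set s : ℂ := 1 / 2 + ((x / (2 * Real.pi) : ℝ) : ℂ) * Complex.I with hs_def
  have hπ : (0:ℝ) < Real.pi := Real.pi_pos
  have hs_re : s.re = 1 / 2 := by
    simp only [hs_def, Complex.add_re, Complex.mul_re, Complex.I_re, Complex.I_im,
      Complex.ofReal_re, Complex.ofReal_im]
    norm_num
  have h1s_re : (1 - s).re = 1 / 2 := by rw [Complex.sub_re, hs_re]; norm_num
  -- beta integral value
  have hbeta : Complex.betaIntegral s (1 - s) = (Real.pi : ℂ) / Complex.sin (Real.pi * s) := by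
    have h1 := Complex.Gamma_mul_Gamma_eq_betaIntegral (by rw [hs_re]; norm_num)
      (by rw [h1s_re]; norm_num)
    rw [show s + (1 - s) = 1 by ring, Complex.Gamma_one, one_mul] at h1
    rw [← h1, Complex.Gamma_mul_Gamma_one_sub]
  -- sin (π s) = cosh (x/2)
  have hsin : Complex.sin ((Real.pi : ℂ) * s) = Complex.cosh (x / 2) := by
    have hπs : (Real.pi : ℂ) * s = Real.pi / 2 + (x / 2) * Complex.I := by
      rw [hs_def]
      have : (Real.pi : ℂ) ≠ 0 := Complex.ofReal_ne_zero.mpr hπ.ne'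
      push_cast
      field_simp
    rw [hπs, Complex.sin_add, Complex.sin_pi_div_two, Complex.cos_pi_div_two, Complex.cos_mul_I]
    push_cast
    ring
  -- substitution
  have hderiv : ∀ t ∈ (Set.univ : Set ℝ), HasDerivWithinAt logistic
      (2 * Real.pi * Real.exp (2 * Real.pi * t) / (1 + Real.exp (2 * Real.pi * t)) ^ 2)
      Set.univ t := fun t _ => (logistic_hasDerivAt t).hasDerivWithinAt
  have hsub := MeasureTheory.integral_image_eq_integral_abs_deriv_smul MeasurableSet.univ hderiv
      logistic_injOn (fun y : ℝ => (y : ℂ) ^ (s - 1) * (1 - (y : ℂ)) ^ (1 - s - 1))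
  rw [Set.image_univ, logistic_range, MeasureTheory.Measure.restrict_univ] at hsub
  have hbeta2 : Complex.betaIntegral s (1 - s)
      = ∫ y in Set.Ioo (0:ℝ) 1, (y : ℂ) ^ (s - 1) * (1 - (y : ℂ)) ^ (1 - s - 1) := by
    rw [Complex.betaIntegral, intervalIntegral.integral_of_le zero_le_one,
      MeasureTheory.integral_Ioc_eq_integral_Ioo]
  have hpw : (fun t : ℝ =>
      |2 * Real.pi * Real.exp (2 * Real.pi * t) / (1 + Real.exp (2 * Real.pi * t)) ^ 2| •
        ((logistic t : ℂ) ^ (s - 1) * (1 - (logistic t : ℂ)) ^ (1 - s - 1)))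
      = fun t : ℝ => (Real.pi : ℂ) *
        (Complex.exp (x * t * Complex.I) / (Real.cosh (Real.pi * t) : ℂ)) := by
    funext t
    exact pointwise_eq x t
  rw [hpw, MeasureTheory.integral_const_mul] at hsub
  have hπ' : (Real.pi : ℂ) ≠ 0 := Complex.ofReal_ne_zero.mpr hπ.ne'
  have : (Real.pi : ℂ) * ∫ t : ℝ, Complex.exp (x * t * Complex.I) / (Real.cosh (Real.pi * t) : ℂ)
      = (Real.pi : ℂ) / Complex.cosh (x / 2) := by
    rw [← hsub, ← hbeta2, hbeta, hsin]
  have h2 : (Real.pi : ℂ) / Complex.cosh (x / 2) = (Real.pi : ℂ) * (1 / Complex.cosh (x / 2)) := by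
    ring
  exact mul_left_cancel₀ hπ' (this.trans h2)

lemma one_add_sq_le_cosh (x : ℝ) : 1 + x ^ 2 ≤ 16 * Real.cosh x := by
  have h1 : 1 ≤ Real.cosh x := Real.one_le_cosh x
  have hcosh : Real.cosh x = (Real.exp x + Real.exp (-x)) / 2 := Real.cosh_eq x
  have hp : x / 2 + 1 ≤ Real.exp (x / 2) := Real.add_one_le_exp _
  have hq : -x / 2 + 1 ≤ Real.exp (-x / 2) := Real.add_one_le_exp _
  have hex : Real.exp x = Real.exp (x / 2) * Real.exp (x / 2) := by
    rw [← Real.exp_add]; ring_nf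
  have hex' : Real.exp (-x) = Real.exp (-x / 2) * Real.exp (-x / 2) := by
    rw [← Real.exp_add]; ring_nf
  have hp0 : 0 < Real.exp (x / 2) := Real.exp_pos _
  have hq0 : 0 < Real.exp (-x / 2) := Real.exp_pos _
  nlinarith [sq_nonneg (Real.exp (x / 2) - (x / 2 + 1)), sq_nonneg (Real.exp (-x / 2) - (-x / 2 + 1)),
    sq_nonneg (x / 2 + 1), sq_nonneg (-x / 2 + 1), sq_nonneg x]

lemma inv_cosh_le (t : ℝ) : (Real.cosh (Real.pi * t))⁻¹ ≤ 16 * (1 + t ^ 2)⁻¹ := by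
  have h1 : 1 + t ^ 2 ≤ 16 * Real.cosh t := one_add_sq_le_cosh t
  have h2 : Real.cosh t ≤ Real.cosh (Real.pi * t) := by
    rw [Real.cosh_le_cosh, abs_mul, abs_of_pos Real.pi_pos]
    nlinarith [abs_nonneg t, Real.pi_gt_three]
  have hc : 0 < Real.cosh (Real.pi * t) := Real.cosh_pos _
  have ht : (0:ℝ) < 1 + t ^ 2 := by positivity
  have ha : (0:ℝ) < (1 + t ^ 2) / 16 := by positivity
  have hab : (1 + t ^ 2) / 16 ≤ Real.cosh (Real.pi * t) := by linarith
  have := inv_anti₀ ha hab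
  calc (Real.cosh (Real.pi * t))⁻¹ ≤ ((1 + t ^ 2) / 16)⁻¹ := this
    _ = 16 * (1 + t ^ 2)⁻¹ := by field_simp

lemma integrable_integrand (x : ℝ) :
    Integrable (fun t : ℝ => Complex.exp (x * t * Complex.I) / (Real.cosh (Real.pi * t) : ℂ)) := by
  have hcont : Continuous fun t : ℝ => Complex.exp (x * t * Complex.I) / (Real.cosh (Real.pi * t) : ℂ) := by
    apply Continuous.div
    · exact Complex.continuous_exp.comp (by continuity)
    · continuity
    · intro t
      exact_mod_cast Complex.ofReal_ne_zero.mpr (Real.cosh_pos _).ne'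
  have hg : Integrable (fun t : ℝ => 16 * (1 + t ^ 2)⁻¹) :=
    (integrable_inv_one_add_sq).const_mul 16
  refine hg.mono' hcont.aestronglyMeasurable (Filter.Eventually.of_forall fun t => ?_)
  rw [norm_div, Complex.norm_exp]
  have : ((x:ℂ) * t * Complex.I).re = 0 := by simp
  rw [this, Real.exp_zero]
  rw [Complex.norm_real, Real.norm_eq_abs, abs_of_pos (Real.cosh_pos _)]
  rw [one_div]
  exact inv_cosh_le t

lemma cpow_cosh_integral (a b : ℝ) (ha : 0 < a) (hb : 0 < b) :
    ∫ t : ℝ, (a:ℂ) ^ (Complex.I * t - 1/2) * (b:ℂ) ^ (-(Complex.I * t) - 1/2)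
      / (Real.cosh (Real.pi * t) : ℂ) = 2 / ((a:ℂ) + (b:ℂ)) := by
  set La := Real.log a with hLa
  set Lb := Real.log b with hLb
  have hpt : ∀ t : ℝ, (a:ℂ) ^ (Complex.I * t - 1/2) * (b:ℂ) ^ (-(Complex.I * t) - 1/2)
      / (Real.cosh (Real.pi * t) : ℂ)
      = (Real.exp (-(La + Lb)/2) : ℂ) *
        (Complex.exp (((La - Lb : ℝ) : ℂ) * t * Complex.I) / (Real.cosh (Real.pi * t) : ℂ)) := by
    intro t
    rw [Complex.cpow_def_of_ne_zero (Complex.ofReal_ne_zero.mpr ha.ne'),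
      Complex.cpow_def_of_ne_zero (Complex.ofReal_ne_zero.mpr hb.ne'),
      ← Complex.ofReal_log ha.le, ← Complex.ofReal_log hb.le, ← Complex.exp_add,
      show ((La : ℝ) : ℂ) * (Complex.I * t - 1/2) + ((Lb : ℝ) : ℂ) * (-(Complex.I * t) - 1/2)
        = ((-(La + Lb)/2 : ℝ) : ℂ) + ((La - Lb : ℝ) : ℂ) * t * Complex.I by push_cast; ring,
      Complex.exp_add, ← Complex.ofReal_exp]
    ring
  simp only [hpt]
  rw [MeasureTheory.integral_const_mul, key_integral (La - Lb)]
  rw [show ((La - Lb : ℝ) : ℂ) / 2 = (((La - Lb)/2 : ℝ) : ℂ) by push_cast; ring,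
    ← Complex.ofReal_cosh]
  have hcosh_pos : 0 < Real.cosh ((La - Lb)/2) := Real.cosh_pos _
  have hreal : Real.exp (-(La + Lb)/2) * (1 / Real.cosh ((La - Lb)/2)) = 2 / (a + b) := by
    set va := Real.exp (La/2) with hva
    set vb := Real.exp (Lb/2) with hvb
    have hva0 : 0 < va := Real.exp_pos _
    have hvb0 : 0 < vb := Real.exp_pos _
    have ha2 : va * va = a := by
      rw [hva, ← Real.exp_add, show La/2 + La/2 = La by ring, hLa, Real.exp_log ha]
    have hb2 : vb * vb = b := by
      rw [hvb, ← Real.exp_add, show Lb/2 + Lb/2 = Lb by ring, hLb, Real.exp_log hb]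
    have h1 : Real.exp (-(La + Lb)/2) = 1 / (va * vb) := by
      rw [hva, hvb, ← Real.exp_add, one_div, ← Real.exp_neg]
      congr 1
      ring
    have h2 : Real.cosh ((La - Lb)/2) = (va / vb + vb / va) / 2 := by
      rw [Real.cosh_eq, show (La - Lb)/2 = La/2 - Lb/2 by ring,
        show -(La/2 - Lb/2) = Lb/2 - La/2 by ring, Real.exp_sub, Real.exp_sub, hva, hvb]
    rw [h1, h2, ← ha2, ← hb2]
    field_simp
  calc (Real.exp (-(La + Lb)/2) : ℂ) * (1 / (Real.cosh ((La - Lb)/2) : ℂ))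
      = ((Real.exp (-(La + Lb)/2) * (1 / Real.cosh ((La - Lb)/2)) : ℝ) : ℂ) := by
        push_cast [hcosh_pos.ne']
        ring
    _ = (((2 : ℝ) / (a + b) : ℝ) : ℂ) := by rw [hreal]
    _ = 2 / ((a:ℂ) + (b:ℂ)) := by push_cast; ring


lemma cpow_pt (a b : ℝ) (ha : 0 < a) (hb : 0 < b) (t : ℝ) :
    (a:ℂ) ^ (Complex.I * t - 1/2) * (b:ℂ) ^ (-(Complex.I * t) - 1/2)
      / (Real.cosh (Real.pi * t) : ℂ)
      = (Real.exp (-(Real.log a + Real.log b)/2) : ℂ) *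
        (Complex.exp (((Real.log a - Real.log b : ℝ) : ℂ) * t * Complex.I)
          / (Real.cosh (Real.pi * t) : ℂ)) := by
  rw [Complex.cpow_def_of_ne_zero (Complex.ofReal_ne_zero.mpr ha.ne'),
    Complex.cpow_def_of_ne_zero (Complex.ofReal_ne_zero.mpr hb.ne'),
    ← Complex.ofReal_log ha.le, ← Complex.ofReal_log hb.le, ← Complex.exp_add,
    show ((Real.log a : ℝ) : ℂ) * (Complex.I * t - 1/2)
        + ((Real.log b : ℝ) : ℂ) * (-(Complex.I * t) - 1/2)
      = ((-(Real.log a + Real.log b)/2 : ℝ) : ℂ)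
        + ((Real.log a - Real.log b : ℝ) : ℂ) * t * Complex.I by push_cast; ring,
    Complex.exp_add, ← Complex.ofReal_exp]
  ring

lemma integrable_cpow_cosh (a b : ℝ) (ha : 0 < a) (hb : 0 < b) :
    Integrable (fun t : ℝ => (a:ℂ) ^ (Complex.I * t - 1/2) * (b:ℂ) ^ (-(Complex.I * t) - 1/2)
      / (Real.cosh (Real.pi * t) : ℂ)) := by
  have hfun : (fun t : ℝ => (a:ℂ) ^ (Complex.I * t - 1/2) * (b:ℂ) ^ (-(Complex.I * t) - 1/2)
      / (Real.cosh (Real.pi * t) : ℂ))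
      = fun t : ℝ => (Real.exp (-(Real.log a + Real.log b)/2) : ℂ) *
        (Complex.exp (((Real.log a - Real.log b : ℝ) : ℂ) * t * Complex.I)
          / (Real.cosh (Real.pi * t) : ℂ)) := funext (cpow_pt a b ha hb)
  rw [hfun]
  exact (integrable_integrand (Real.log a - Real.log b)).const_mul _

/-- If `A` is positive definite Hermitian and `B` arbitrary, then
`Y := (1/2) ∫_ℝ A^{it-1/2} B A^{-it-1/2} dt / cosh (π t)` satisfies `A Y + Y A = B`. -/
theorem sylvester_integral_solution {n : ℕ} (A B : Matrix (Fin n) (Fin n) ℂ)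
    (hA : A.PosDef)
    (Y : Matrix (Fin n) (Fin n) ℂ)
    (hY : Y = (1 / 2 : ℂ) • Matrix.of fun i j => ∫ t : ℝ,
        (matCpow A (Complex.I * t - 1 / 2) * B * matCpow A (-(Complex.I * t) - 1 / 2)) i j /
          (Real.cosh (Real.pi * t) : ℂ)) :
    A * Y + Y * A = B := by
  have hH : A.IsHermitian := hA.1
  set U : Matrix (Fin n) (Fin n) ℂ := (hH.eigenvectorUnitary : Matrix (Fin n) (Fin n) ℂ)
    with hU_def
  have hUU : star U * U = 1 := Matrix.mem_unitaryGroup_iff'.mp hH.eigenvectorUnitary.2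
  have hUU' : U * star U = 1 := Matrix.mem_unitaryGroup_iff.mp hH.eigenvectorUnitary.2
  set ev : Fin n → ℝ := hH.eigenvalues with hev_def
  have hev : ∀ i, 0 < ev i := fun i => hA.eigenvalues_pos i
  set C : Matrix (Fin n) (Fin n) ℂ := star U * B * U with hC_def
  set M : Matrix (Fin n) (Fin n) ℂ :=
    Matrix.of (fun k l => C k l / ((ev k : ℂ) + (ev l : ℂ))) with hM_def
  have hmc : ∀ z : ℂ, matCpow A z
      = U * Matrix.diagonal (fun i => (ev i : ℂ) ^ z) * star U := by
    intro z
    rw [matCpow, dif_pos hH]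
  have hspec : A = U * Matrix.diagonal (fun i => (ev i : ℂ)) * star U := by
    have h := hH.spectral_theorem
    rw [Unitary.conjStarAlgAut_apply] at h
    exact h
  have hF : ∀ t : ℝ, matCpow A (Complex.I * t - 1/2) * B * matCpow A (-(Complex.I * t) - 1/2)
      = U * (Matrix.diagonal (fun i => (ev i : ℂ) ^ (Complex.I * t - 1/2)) * C *
          Matrix.diagonal (fun i => (ev i : ℂ) ^ (-(Complex.I * t) - 1/2))) * star U := by
    intro t
    rw [hmc, hmc, hC_def]
    simp only [Matrix.mul_assoc]
  have hY2 : Y = U * M * star U := by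
    rw [hY]
    ext i j
    rw [Matrix.smul_apply, Matrix.of_apply, smul_eq_mul]
    have hintg : ∀ t : ℝ,
        (matCpow A (Complex.I * t - 1/2) * B * matCpow A (-(Complex.I * t) - 1/2)) i j
          / (Real.cosh (Real.pi * t) : ℂ)
        = ∑ l, ∑ k, (U i k * C k l * (star U) l j) *
            ((ev k : ℂ) ^ (Complex.I * t - 1/2) * (ev l : ℂ) ^ (-(Complex.I * t) - 1/2)
              / (Real.cosh (Real.pi * t) : ℂ)) := by
      intro t
      rw [hF t, Matrix.mul_apply, Finset.sum_div]
      refine Finset.sum_congr rfl fun l _ => ?_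
      rw [Matrix.mul_apply, Finset.sum_mul, Finset.sum_div]
      refine Finset.sum_congr rfl fun k _ => ?_
      rw [Matrix.mul_diagonal, Matrix.diagonal_mul]
      ring
    simp only [hintg]
    rw [MeasureTheory.integral_finset_sum _ (fun l _ => integrable_finset_sum _ (fun k _ =>
      ((integrable_cpow_cosh (ev k) (ev l) (hev k) (hev l)).const_mul _)))]
    have hinner : ∀ l : Fin n, (∫ t : ℝ, ∑ k, (U i k * C k l * (star U) l j) *
            ((ev k : ℂ) ^ (Complex.I * t - 1/2) * (ev l : ℂ) ^ (-(Complex.I * t) - 1/2)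
              / (Real.cosh (Real.pi * t) : ℂ)))
        = ∑ k, (U i k * C k l * (star U) l j) * (2 / ((ev k : ℂ) + (ev l : ℂ))) := by
      intro l
      rw [MeasureTheory.integral_finset_sum _ (fun k _ =>
        ((integrable_cpow_cosh (ev k) (ev l) (hev k) (hev l)).const_mul _))]
      refine Finset.sum_congr rfl fun k _ => ?_
      rw [MeasureTheory.integral_const_mul, cpow_cosh_integral (ev k) (ev l) (hev k) (hev l)]
    simp only [hinner]
    rw [Matrix.mul_apply, Finset.mul_sum]
    refine Finset.sum_congr rfl fun l _ => ?_
    rw [Matrix.mul_apply, Finset.sum_mul, Finset.mul_sum]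
    refine Finset.sum_congr rfl fun k _ => ?_
    rw [hM_def, Matrix.of_apply]
    ring
  rw [hY2, hspec]
  have h1 : U * Matrix.diagonal (fun i => (ev i : ℂ)) * star U * (U * M * star U)
      = U * (Matrix.diagonal (fun i => (ev i : ℂ)) * M) * star U := by
    simp only [Matrix.mul_assoc]
    rw [← Matrix.mul_assoc (star U) U, hUU, Matrix.one_mul]
  have h2 : U * M * star U * (U * Matrix.diagonal (fun i => (ev i : ℂ)) * star U)
      = U * (M * Matrix.diagonal (fun i => (ev i : ℂ))) * star U := by
    simp only [Matrix.mul_assoc]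
    rw [← Matrix.mul_assoc (star U) U, hUU, Matrix.one_mul]
  rw [h1, h2, ← Matrix.add_mul, ← Matrix.mul_add]
  have hDM : Matrix.diagonal (fun i => (ev i : ℂ)) * M + M * Matrix.diagonal (fun i => (ev i : ℂ))
      = C := by
    ext k l
    have hne : ((ev k : ℂ) + (ev l : ℂ)) ≠ 0 := by
      have : (0:ℝ) < ev k + ev l := by have := hev k; have := hev l; linarith
      exact_mod_cast this.ne'
    simp only [Matrix.add_apply, Matrix.diagonal_mul, Matrix.mul_diagonal, hM_def,
      Matrix.of_apply]
    field_simp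
  rw [hDM, hC_def]
  simp only [Matrix.mul_assoc]
  rw [hUU', Matrix.mul_one, ← Matrix.mul_assoc, hUU', Matrix.one_mul]
end

section
/- Let g be a positive definite symmetric n×n real matrix and J an invertible n×n real matrix. Then det Λ(J,g) = det J / |det J|; in particular, if det J > 0 then det Λ(J,g) = 1, so Λ(J,g) belongs to SO(n). -/
open Matrix

/-- The positive semidefinite square root of a positive semidefinite real matrix.
(Junk value `0` if `A` is not positive semidefinite.) -/
noncomputable def matSqrtR {n : ℕ} (A : Matrix (Fin n) (Fin n) ℝ) :
    Matrix (Fin n) (Fin n) ℝ :=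
  @dite _ A.PosSemidef (Classical.dec _) (fun h => (h.1.eigenvectorUnitary : Matrix (Fin n) (Fin n) ℝ) *
    diagonal ((↑) ∘ (√·) ∘ h.1.eigenvalues) * (star h.1.eigenvectorUnitary : Matrix (Fin n) (Fin n) ℝ)) (fun _ => 0)

/-- The natural gauge transformation `Λ(J,g) := √(J⁻ᵀ g J⁻¹) · J · (√g)⁻¹`. -/
noncomputable def Lam {n : ℕ} (J g : Matrix (Fin n) (Fin n) ℝ) :
    Matrix (Fin n) (Fin n) ℝ :=
  matSqrtR ((J⁻¹)ᵀ * g * J⁻¹) * J * (matSqrtR g)⁻¹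

lemma psd_det_nonneg {n : ℕ} {M : Matrix (Fin n) (Fin n) ℝ}
    (hM : M.PosSemidef) : 0 ≤ M.det := by
  rw [hM.isHermitian.det_eq_prod_eigenvalues]
  exact Finset.prod_nonneg fun i _ => hM.eigenvalues_nonneg i

lemma matSqrtR_spec {n : ℕ} {A : Matrix (Fin n) (Fin n) ℝ} (hA : A.PosSemidef) :
    (matSqrtR A).PosSemidef ∧ matSqrtR A * matSqrtR A = A := by
  unfold matSqrtR
  rw [dif_pos hA]
  set U : Matrix (Fin n) (Fin n) ℝ := (hA.1.eigenvectorUnitary : Matrix (Fin n) (Fin n) ℝ) with hU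
  have hUU : star U * U = 1 := Unitary.star_mul_self_of_mem hA.1.eigenvectorUnitary.2
  have hspec : A = U * diagonal (RCLike.ofReal ∘ hA.1.eigenvalues) * star U := by
    have := hA.1.spectral_theorem
    simpa [Unitary.conjStarAlgAut_apply] using this
  constructor
  · have := (posSemidef_diagonal_iff.2 (fun i => Real.sqrt_nonneg (hA.1.eigenvalues i))).mul_mul_conjTranspose_same U
    simpa [star_eq_conjTranspose, Function.comp_def] using this
  · calc _ = U * (diagonal ((↑) ∘ (√·) ∘ hA.1.eigenvalues) * (star U * U) * diagonal ((↑) ∘ (√·) ∘ hA.1.eigenvalues)) * star U := by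
          simp only [Matrix.mul_assoc]
      _ = A := by
          rw [hUU, Matrix.mul_one, diagonal_mul_diagonal]
          conv_rhs => rw [hspec]
          congr 2
          congr 1
          funext i
          simp [Real.mul_self_sqrt (hA.eigenvalues_nonneg i)]

/-- For `g` positive definite symmetric and `J` invertible,
`det Λ(J,g) = det J / |det J|`; in particular if `det J > 0` then `det Λ(J,g) = 1`,
so `Λ(J,g)` belongs to `SO(n)`. -/
theorem Lam_det {n : ℕ} (g J : Matrix (Fin n) (Fin n) ℝ)
    (hg : g.PosDef) (hJ : IsUnit J) :
    (Lam J g).det = J.det / |J.det| ∧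
      (0 < J.det → (Lam J g).det = 1 ∧ (Lam J g)ᵀ * Lam J g = 1) := by
  have hg' := hg.posSemidef
  have hdJ : J.det ≠ 0 := by
    have := (isUnit_iff_isUnit_det J).1 hJ
    exact this.ne_zero
  have hh : ((J⁻¹)ᵀ * g * J⁻¹).PosSemidef := by
    have := hg'.conjTranspose_mul_mul_same J⁻¹
    simpa [conjTranspose_eq_transpose_of_trivial] using this
  set S := matSqrtR ((J⁻¹)ᵀ * g * J⁻¹) with hSdef
  set T := matSqrtR g with hTdef
  obtain ⟨hSpsd, hSS⟩ := matSqrtR_spec hh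
  obtain ⟨hTpsd, hTT⟩ := matSqrtR_spec hg'
  have hdetg : 0 < g.det := hg.det_pos
  have hdT2 : T.det * T.det = g.det := by rw [← det_mul, hTT]
  have hdT : 0 < T.det := by
    rcases lt_or_eq_of_le (psd_det_nonneg hTpsd) with h | h
    · exact h
    · exfalso; nlinarith
  have hdS2 : S.det * S.det = g.det / J.det ^ 2 := by
    rw [← det_mul, hSS, det_mul, det_mul, det_transpose, det_nonsing_inv,
      Ring.inverse_eq_inv', eq_div_iff (pow_ne_zero 2 hdJ), pow_two]
    field_simp
  have hdSnn : 0 ≤ S.det := psd_det_nonneg hSpsd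
  have key : S.det * |J.det| = T.det := by
    have h1 : (S.det * |J.det|) ^ 2 = T.det ^ 2 := by
      rw [mul_pow, sq_abs]
      have : J.det ^ 2 ≠ 0 := pow_ne_zero _ hdJ
      field_simp at hdS2 ⊢
      nlinarith [hdS2, hdT2]
    have h2 : 0 ≤ S.det * |J.det| := mul_nonneg hdSnn (abs_nonneg _)
    nlinarith [h1, h2, hdT]
  have habs : |J.det| ≠ 0 := abs_ne_zero.2 hdJ
  have hdetLam : (Lam J g).det = S.det * J.det * T.det⁻¹ := by
    rw [Lam, det_mul, det_mul, det_nonsing_inv, Ring.inverse_eq_inv']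
  have hdet : (Lam J g).det = J.det / |J.det| := by
    have hSne : S.det ≠ 0 := by
      intro h; rw [h, zero_mul] at key; exact hdT.ne' key.symm
    rw [hdetLam, ← key]
    field_simp
  refine ⟨hdet, fun hpos => ⟨?_, ?_⟩⟩
  · rw [hdet, abs_of_pos hpos, div_self hpos.ne']
  · have hJJ : J⁻¹ * J = 1 := nonsing_inv_mul J (isUnit_iff_ne_zero.2 hdJ)
    have hTl : T⁻¹ * T = 1 := nonsing_inv_mul T (isUnit_iff_ne_zero.2 hdT.ne')
    have hTr : T * T⁻¹ = 1 := mul_nonsing_inv T (isUnit_iff_ne_zero.2 hdT.ne')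
    have hSsym : Sᵀ = S := by
      have := hSpsd.isHermitian
      rwa [IsHermitian, conjTranspose_eq_transpose_of_trivial] at this
    have hTsym : Tᵀ = T := by
      have := hTpsd.isHermitian
      rwa [IsHermitian, conjTranspose_eq_transpose_of_trivial] at this
    have hLam : Lam J g = S * J * T⁻¹ := rfl
    have hJg : Jᵀ * ((J⁻¹)ᵀ * g * J⁻¹) * J = g := by
      rw [show Jᵀ * ((J⁻¹)ᵀ * g * J⁻¹) * J = (Jᵀ * (J⁻¹)ᵀ) * (g * (J⁻¹ * J)) by
        simp only [Matrix.mul_assoc], ← transpose_mul, hJJ, transpose_one,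
        Matrix.one_mul, Matrix.mul_one]
    calc (Lam J g)ᵀ * Lam J g
        = T⁻¹ * (Jᵀ * (S * S) * J) * T⁻¹ := by
          rw [hLam, transpose_mul, transpose_mul, transpose_nonsing_inv, hTsym, hSsym]
          simp only [Matrix.mul_assoc]
      _ = T⁻¹ * (T * T) * T⁻¹ := by rw [hSS, hJg, hTT]
      _ = (T⁻¹ * T) * (T * T⁻¹) := by simp only [Matrix.mul_assoc]
      _ = 1 := by rw [hTl, hTr, Matrix.one_mul]
end
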